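/- Let q₀ be a real number, viewed as a quaternion, let 0 < r, and let a : ℕ → ℍ be a sequence of quaternions such that for some r' > r the series ∑ ‖a n‖ · r'ⁿ is summable (so the power series f(q) = ∑' n, (q − q₀)ⁿ · a n converges absolutely for all ‖q − q₀‖ ≤ r). Let A be a real number such that |Re f(q)| ≤ A for every q ∈ ℍ with ‖q − q₀‖ = r. Then for every ρ with 0 < ρ < r and every q ∈ ℍ with ‖q − q₀‖ ≤ ρ one has ‖f(q)‖ ≤ ‖Im (a 0)‖ + |Re (a 0)| · (r + ρ)/(r − ρ) + 2A · ρ/(r − ρ). (Note f(q₀) = a 0, so Re(a 0) and ‖Im(a 0)‖ are the β and |γ| of the classical statement.) -/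

import Mathlib

local notation "ℍ" => Quaternion ℝ

open Real


lemma int_cos_int (m : ℤ) (hm : m ≠ 0) : ∫ θ in (0:ℝ)..(2*π), Real.cos (m * θ) = 0 := by
  have : (m:ℝ) ≠ 0 := Int.cast_ne_zero.mpr hm
  rw [intervalIntegral.integral_comp_mul_left (fun x => Real.cos x) this]
  simp [integral_cos]
  right
  rw [show (m:ℝ) * (2*π) = (2*m : ℤ) * π by push_cast; ring]
  exact Real.sin_int_mul_pi _

lemma int_sin_int (m : ℤ) : ∫ θ in (0:ℝ)..(2*π), Real.sin (m * θ) = 0 := by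
  rcases eq_or_ne m 0 with h | h
  · simp [h]
  have : (m:ℝ) ≠ 0 := Int.cast_ne_zero.mpr h
  rw [intervalIntegral.integral_comp_mul_left (fun x => Real.sin x) this]
  simp [integral_sin]

lemma int_cos_int' (m : ℤ) : ∫ θ in (0:ℝ)..(2*π), Real.cos (m * θ)
    = if m = 0 then 2*π else 0 := by
  rcases eq_or_ne m 0 with h | h
  · simp [h]
  · simp [h, int_cos_int m h]

lemma orth_cc (k n : ℕ) (hn : n ≠ 0) :
    ∫ θ in (0:ℝ)..(2*π), Real.cos (k*θ) * Real.cos (n*θ) = if k = n then π else 0 := by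
  have key : ∀ θ:ℝ, Real.cos (k*θ) * Real.cos (n*θ)
      = (Real.cos (((k:ℝ)-n) * θ) + Real.cos (((k:ℝ)+n) * θ)) / 2 := by
    intro θ
    push_cast
    rw [sub_mul, add_mul, Real.cos_sub, Real.cos_add]
    ring
  rw [intervalIntegral.integral_congr (g := fun θ =>
      (Real.cos (((k:ℝ)-n) * θ) + Real.cos (((k:ℝ)+n) * θ)) / 2) (fun θ _ => key θ)]
  have h1 : IntervalIntegrable (fun θ:ℝ => Real.cos (((k:ℝ)-n) * θ)) MeasureTheory.volume 0 (2*π) :=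
    (Real.continuous_cos.comp (continuous_const.mul continuous_id)).intervalIntegrable _ _
  have h2 : IntervalIntegrable (fun θ:ℝ => Real.cos (((k:ℝ)+n) * θ)) MeasureTheory.volume 0 (2*π) :=
    (Real.continuous_cos.comp (continuous_const.mul continuous_id)).intervalIntegrable _ _
  have e1 := int_cos_int' ((k:ℤ)-n)
  have e2 := int_cos_int' ((k:ℤ)+n)
  push_cast at e1 e2
  rw [intervalIntegral.integral_div, intervalIntegral.integral_add h1 h2, e1, e2]
  have hkn : ¬ ((k:ℤ) + n = 0) := by positivity
  rcases eq_or_ne k n with h | h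
  · subst h
    rw [sub_self]
    simp [hkn, hn]
  · have hs : ¬ ((k:ℤ) - n = 0) := sub_ne_zero.mpr (by exact_mod_cast h)
    split_ifs <;> first | ring1 | exact absurd ‹(k:ℤ) - n = 0› hs | exact absurd ‹(k:ℤ) + n = 0› hkn

lemma orth_sc (k n : ℕ) :
    ∫ θ in (0:ℝ)..(2*π), Real.sin (k*θ) * Real.cos (n*θ) = 0 := by
  have key : ∀ θ:ℝ, Real.sin (k*θ) * Real.cos (n*θ)
      = (Real.sin (((k:ℝ)+n) * θ) + Real.sin (((k:ℝ)-n) * θ)) / 2 := by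
    intro θ
    push_cast
    rw [add_mul, sub_mul, Real.sin_add, Real.sin_sub]
    ring
  rw [intervalIntegral.integral_congr (g := fun θ =>
      (Real.sin (((k:ℝ)+n) * θ) + Real.sin (((k:ℝ)-n) * θ)) / 2) (fun θ _ => key θ)]
  have h1 : IntervalIntegrable (fun θ:ℝ => Real.sin (((k:ℝ)+n) * θ)) MeasureTheory.volume 0 (2*π) :=
    (Real.continuous_sin.comp (continuous_const.mul continuous_id)).intervalIntegrable _ _
  have h2 : IntervalIntegrable (fun θ:ℝ => Real.sin (((k:ℝ)-n) * θ)) MeasureTheory.volume 0 (2*π) :=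
    (Real.continuous_sin.comp (continuous_const.mul continuous_id)).intervalIntegrable _ _
  have e1 := int_sin_int ((k:ℤ)+n)
  have e2 := int_sin_int ((k:ℤ)-n)
  push_cast at e1 e2
  rw [intervalIntegral.integral_div, intervalIntegral.integral_add h1 h2, e1, e2]
  norm_num

lemma orth_cs (k n : ℕ) :
    ∫ θ in (0:ℝ)..(2*π), Real.cos (k*θ) * Real.sin (n*θ) = 0 := by
  rw [intervalIntegral.integral_congr (g := fun θ => Real.sin (n*θ) * Real.cos (k*θ))
    (fun θ _ => mul_comm _ _), orth_sc]

lemma orth_ss (k n : ℕ) (hn : n ≠ 0) :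
    ∫ θ in (0:ℝ)..(2*π), Real.sin (k*θ) * Real.sin (n*θ) = if k = n then π else 0 := by
  have key : ∀ θ:ℝ, Real.sin (k*θ) * Real.sin (n*θ)
      = (Real.cos (((k:ℝ)-n) * θ) - Real.cos (((k:ℝ)+n) * θ)) / 2 := by
    intro θ
    push_cast
    rw [sub_mul, add_mul, Real.cos_sub, Real.cos_add]
    ring
  rw [intervalIntegral.integral_congr (g := fun θ =>
      (Real.cos (((k:ℝ)-n) * θ) - Real.cos (((k:ℝ)+n) * θ)) / 2) (fun θ _ => key θ)]
  have h1 : IntervalIntegrable (fun θ:ℝ => Real.cos (((k:ℝ)-n) * θ)) MeasureTheory.volume 0 (2*π) :=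
    (Real.continuous_cos.comp (continuous_const.mul continuous_id)).intervalIntegrable _ _
  have h2 : IntervalIntegrable (fun θ:ℝ => Real.cos (((k:ℝ)+n) * θ)) MeasureTheory.volume 0 (2*π) :=
    (Real.continuous_cos.comp (continuous_const.mul continuous_id)).intervalIntegrable _ _
  have e1 := int_cos_int' ((k:ℤ)-n)
  have e2 := int_cos_int' ((k:ℤ)+n)
  push_cast at e1 e2
  rw [intervalIntegral.integral_div, intervalIntegral.integral_sub h1 h2, e1, e2]
  have hkn : ¬ ((k:ℤ) + n = 0) := by positivity
  rcases eq_or_ne k n with h | h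
  · subst h
    rw [sub_self]
    simp [hkn, hn]
  · have hs : ¬ ((k:ℤ) - n = 0) := sub_ne_zero.mpr (by exact_mod_cast h)
    split_ifs <;> first | ring1 | exact absurd ‹(k:ℤ) - n = 0› hs | exact absurd ‹(k:ℤ) + n = 0› hkn

namespace BCaux

noncomputable def e (I : ℍ) (θ : ℝ) : ℍ := (Real.cos θ : ℍ) + Real.sin θ • I

lemma sumsq (I : ℍ) (hre : I.re = 0) (hnorm : Quaternion.normSq I = 1) :
    I.imI*I.imI + I.imJ*I.imJ + I.imK*I.imK = 1 := by
  have := hnorm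
  rw [Quaternion.normSq_def', hre] at this
  nlinarith [this]

lemma mulI (I : ℍ) (hre : I.re = 0) (hnorm : Quaternion.normSq I = 1) : I * I = -1 := by
  have h := sumsq I hre hnorm
  ext <;> simp [Quaternion.re_mul, Quaternion.imI_mul, Quaternion.imJ_mul, Quaternion.imK_mul, hre, Quaternion.re_one, Quaternion.imI_one, Quaternion.imJ_one, Quaternion.imK_one] <;> linarith

lemma e_add (I : ℍ) (hre : I.re = 0) (hnorm : Quaternion.normSq I = 1) (θ φ : ℝ) :
    e I θ * e I φ = e I (θ + φ) := by
  have h := sumsq I hre hnorm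
  simp only [e, Real.cos_add, Real.sin_add]
  ext <;>
    simp [Quaternion.re_mul, Quaternion.imI_mul, Quaternion.imJ_mul, Quaternion.imK_mul, hre] <;>
    first
      | ring1
      | linear_combination (Real.sin θ * Real.sin φ) * h
      | linear_combination (-Real.sin θ * Real.sin φ) * h
      | linear_combination (2 * Real.sin θ * Real.sin φ) * h
      | linear_combination (-2 * Real.sin θ * Real.sin φ) * h


lemma e_pow (I : ℍ) (hre : I.re = 0) (hnorm : Quaternion.normSq I = 1) (θ : ℝ) (k : ℕ) :
    (e I θ)^k = e I (k * θ) := by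
  induction k with
  | zero => simp [BCaux.e]
  | succ m ih =>
    rw [pow_succ, ih, e_add I hre hnorm]
    congr 1
    push_cast
    ring

lemma norm_e (I : ℍ) (hre : I.re = 0) (hnorm : Quaternion.normSq I = 1) (θ : ℝ) :
    ‖e I θ‖ = 1 := by
  have h := sumsq I hre hnorm
  have hn : Quaternion.normSq (e I θ) = 1 := by
    rw [Quaternion.normSq_def']
    simp [e, hre]
    nlinarith [Real.sin_sq_add_cos_sq θ, h]
  have h2 := Quaternion.normSq_eq_norm_mul_self (e I θ)
  rw [hn] at h2
  nlinarith [norm_nonneg (e I θ)]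

lemma re_e_mul (I : ℍ) (θ : ℝ) (x : ℍ) :
    (e I θ * x).re = Real.cos θ * x.re + Real.sin θ * (I * x).re := by
  simp [e, add_mul, Quaternion.re_mul, Quaternion.re_smul]

end BCaux

noncomputable def reCLM : ℍ →L[ℝ] ℝ :=
  { toLinearMap := QuaternionAlgebra.reₗ (c₁ := (-1:ℝ)) (c₂ := (0:ℝ)) (c₃ := (-1:ℝ))
    cont := Quaternion.continuous_re }

@[simp] lemma reCLM_apply (x : ℍ) : reCLM x = x.re := rfl

lemma abs_re_le_norm (x : ℍ) : |x.re| ≤ ‖x‖ := by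
  have h1 : Quaternion.normSq x = ‖x‖ * ‖x‖ := Quaternion.normSq_eq_norm_mul_self x
  rw [Quaternion.normSq_def'] at h1
  have : |x.re| * |x.re| ≤ ‖x‖ * ‖x‖ := by
    rw [← h1, abs_mul_abs_self]
    nlinarith [sq_nonneg x.imI, sq_nonneg x.imJ, sq_nonneg x.imK]
  nlinarith [abs_nonneg x.re, norm_nonneg x]

lemma norm_sq_eq (x : ℍ) : ‖x‖^2 = x.re^2 + ‖x.im‖^2 := by
  have h1 : Quaternion.normSq x = ‖x‖ * ‖x‖ := Quaternion.normSq_eq_norm_mul_self x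
  have h2 : Quaternion.normSq x.im = ‖x.im‖ * ‖x.im‖ := Quaternion.normSq_eq_norm_mul_self _
  rw [Quaternion.normSq_def'] at h1 h2
  simp only [Quaternion.re_im, Quaternion.imI_im, Quaternion.imJ_im, Quaternion.imK_im] at h2
  nlinarith [h1, h2]

lemma exists_I (x : ℍ) : ∃ I : ℍ, I.re = 0 ∧ Quaternion.normSq I = 1 ∧ (I * x).re = -‖x.im‖ := by
  by_cases h : x.im = 0
  · refine ⟨(⟨0,1,0,0⟩ : ℍ), rfl, (Quaternion.normSq_def' _).trans (by norm_num), ?_⟩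
    have himI : x.imI = 0 := by
      have := congrArg QuaternionAlgebra.imI h
      simpa [Quaternion.imI_zero] using this
    rw [h]
    exact (Quaternion.re_mul _ _).trans (by simp [himI])
  · set v := ‖x.im‖ with hv_def
    have hv : 0 < v := norm_pos_iff.mpr h
    have hv2 : v*v = x.imI*x.imI + x.imJ*x.imJ + x.imK*x.imK := by
      have h2 := Quaternion.normSq_eq_norm_mul_self x.im
      rw [Quaternion.normSq_def'] at h2
      simp only [Quaternion.re_im, Quaternion.imI_im, Quaternion.imJ_im, Quaternion.imK_im] at h2
      nlinarith [h2]
    refine ⟨v⁻¹ • x.im, by simp, ?_, ?_⟩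
    · rw [Quaternion.normSq_def']
      simp only [Quaternion.re_smul, Quaternion.imI_smul, Quaternion.imJ_smul,
        Quaternion.imK_smul, Quaternion.re_im, Quaternion.imI_im, Quaternion.imJ_im,
        Quaternion.imK_im, smul_eq_mul]
      field_simp
      nlinarith [hv2]
    · simp only [Quaternion.re_mul, Quaternion.re_smul, Quaternion.imI_smul, Quaternion.imJ_smul,
        Quaternion.imK_smul, Quaternion.re_im, Quaternion.imI_im, Quaternion.imJ_im,
        Quaternion.imK_im, smul_eq_mul]
      field_simp
      nlinarith [hv2]

open MeasureTheory in
lemma coeff_bound (q₀ r : ℝ) (hr : 0 < r) (a : ℕ → ℍ)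
    (hsum : Summable (fun n => ‖a n‖ * r ^ n))
    (A : ℝ)
    (hA : ∀ q : ℍ, ‖q - (q₀ : ℍ)‖ = r →
      |(∑' n, (q - (q₀ : ℍ)) ^ n * a n).re| ≤ A)
    (n : ℕ) (hn : n ≠ 0) : ‖a n‖ * r ^ n ≤ 2 * A := by
  obtain ⟨I, hIre, hInorm, hIa⟩ := exists_I (a n)
  set M := ‖a n‖ with hM_def
  set c := (a n).re with hc_def
  set s := (I * a n).re with hs_def
  have hM2 : c^2 + s^2 = M^2 := by
    rw [hIa, hM_def, norm_sq_eq (a n), ← hc_def]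
    ring
  set q : ℝ → ℍ := fun θ => (q₀ : ℍ) + r • BCaux.e I θ with hq_def
  have hqnorm : ∀ θ, ‖q θ - (q₀ : ℍ)‖ = r := by
    intro θ
    rw [hq_def]
    simp only [add_sub_cancel_left]
    rw [norm_smul, BCaux.norm_e I hIre hInorm θ, Real.norm_eq_abs, abs_of_pos hr, mul_one]
  have habs : ∀ θ : ℝ, Summable (fun k : ℕ => (r ^ k : ℝ) • (BCaux.e I ((k:ℝ) * θ) * a k)) := by
    intro θ
    apply Summable.of_norm
    apply hsum.congr
    intro k
    rw [norm_smul, norm_mul, BCaux.norm_e I hIre hInorm, one_mul, Real.norm_eq_abs,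
      abs_of_pos (pow_pos hr k), mul_comm]
  set g : ℝ → ℝ := fun θ => (∑' k, (q θ - (q₀ : ℍ)) ^ k * a k).re with hg_def
  have hgA : ∀ θ, |g θ| ≤ A := fun θ => hA (q θ) (hqnorm θ)
  have hgeq : ∀ θ, g θ = ∑' k : ℕ, r ^ k *
      (Real.cos ((k:ℝ) * θ) * (a k).re + Real.sin ((k:ℝ) * θ) * (I * a k).re) := by
    intro θ
    rw [hg_def]
    have h1 : ∀ k : ℕ, (q θ - (q₀ : ℍ)) ^ k * a k
        = (r ^ k : ℝ) • (BCaux.e I ((k:ℝ) * θ) * a k) := by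
      intro k
      rw [hq_def]
      simp only [add_sub_cancel_left]
      rw [smul_pow, BCaux.e_pow I hIre hInorm, smul_mul_assoc]
    simp only [h1]
    have h2 := (reCLM.hasSum (habs θ).hasSum).tsum_eq
    simp only [reCLM_apply] at h2
    rw [← h2]
    congr 1
    funext k
    rw [Quaternion.re_smul, smul_eq_mul, BCaux.re_e_mul]
  -- the weight function
  have hA0 : 0 ≤ A := le_trans (abs_nonneg _) (hgA 0)
  set w : ℝ → ℝ := fun θ => Real.cos ((n:ℝ)*θ) * c + Real.sin ((n:ℝ)*θ) * s with hw_def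
  have hMnn : 0 ≤ M := norm_nonneg _
  have hw : ∀ θ, |w θ| ≤ M := by
    intro θ
    have h1 : (w θ)^2 ≤ M^2 := by
      have h2 := Real.sin_sq_add_cos_sq ((n:ℝ)*θ)
      have h3 := sq_nonneg (c * Real.sin ((n:ℝ)*θ) - s * Real.cos ((n:ℝ)*θ))
      rw [hw_def]
      simp only
      nlinarith [hM2]
    have h4 := Real.sqrt_le_sqrt h1
    rwa [Real.sqrt_sq_eq_abs, Real.sqrt_sq hMnn] at h4
  set F : ℕ → ℝ → ℝ := fun k θ => (r ^ k *
      (Real.cos ((k:ℝ) * θ) * (a k).re + Real.sin ((k:ℝ) * θ) * (I * a k).re)) * w θ with hF_def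
  have hgw : ∀ θ, g θ * w θ = ∑' k, F k θ := by
    intro θ
    rw [hgeq θ]
    exact (tsum_mul_right).symm
  have hFcont : ∀ k, Continuous (F k) := by
    intro k
    apply Continuous.mul
    · apply Continuous.mul continuous_const
      apply Continuous.add
      · exact (Real.continuous_cos.comp (continuous_const.mul continuous_id)).mul continuous_const
      · exact (Real.continuous_sin.comp (continuous_const.mul continuous_id)).mul continuous_const
    · apply Continuous.add
      · exact (Real.continuous_cos.comp (continuous_const.mul continuous_id)).mul continuous_const
      · exact (Real.continuous_sin.comp (continuous_const.mul continuous_id)).mul continuous_const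
  have hInormI : ‖I‖ = 1 := by
    have h2 := Quaternion.normSq_eq_norm_mul_self I
    rw [hInorm] at h2
    nlinarith [norm_nonneg I]
  have hFbound : ∀ k θ, ‖F k θ‖ ≤ 2 * (‖a k‖ * r ^ k) * M := by
    intro k θ
    rw [hF_def]
    simp only [Real.norm_eq_abs]
    rw [abs_mul]
    have hb1 : |(a k).re| ≤ ‖a k‖ := abs_re_le_norm _
    have hb2 : |(I * a k).re| ≤ ‖a k‖ := by
      calc |(I * a k).re| ≤ ‖I * a k‖ := abs_re_le_norm _
        _ = ‖a k‖ := by rw [norm_mul, hInormI, one_mul]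
    have hb3 : |Real.cos ((k:ℝ) * θ) * (a k).re + Real.sin ((k:ℝ) * θ) * (I * a k).re|
        ≤ 2 * ‖a k‖ := by
      calc _ ≤ |Real.cos ((k:ℝ) * θ) * (a k).re| + |Real.sin ((k:ℝ) * θ) * (I * a k).re| :=
            abs_add_le _ _
        _ ≤ 1 * ‖a k‖ + 1 * ‖a k‖ := by
            rw [abs_mul, abs_mul]
            gcongr
            · exact Real.abs_cos_le_one _
            · exact Real.abs_sin_le_one _
        _ = 2 * ‖a k‖ := by ring
    calc |r ^ k * (Real.cos ((k:ℝ) * θ) * (a k).re + Real.sin ((k:ℝ) * θ) * (I * a k).re)| * |w θ|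
        ≤ (r ^ k * (2 * ‖a k‖)) * M := by
          rw [abs_mul, abs_of_pos (pow_pos hr k)]
          exact mul_le_mul (mul_le_mul le_rfl hb3 (abs_nonneg _) (le_of_lt (pow_pos hr k)))
            (hw θ) (abs_nonneg _) (by positivity)
      _ = 2 * (‖a k‖ * r ^ k) * M := by ring
  have h2pi : (0:ℝ) ≤ 2 * Real.pi := by positivity
  -- integrability on the interval
  have hFint : ∀ k, IntegrableOn (F k) (Set.Ioc (0:ℝ) (2*Real.pi)) volume :=
    fun k => (hFcont k).integrableOn_Ioc
  have hmeas : MeasurableSet (Set.Ioc (0:ℝ) (2*Real.pi)) := measurableSet_Ioc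
  have hvol : (volume (Set.Ioc (0:ℝ) (2*Real.pi))).toReal = 2 * Real.pi := by
    rw [Real.volume_Ioc, sub_zero, ENNReal.toReal_ofReal (by positivity)]
  have hFintnorm : ∀ k, ∫ θ in Set.Ioc (0:ℝ) (2*Real.pi), ‖F k θ‖
      ≤ 2 * (‖a k‖ * r ^ k) * M * (2 * Real.pi) := by
    intro k
    calc ∫ θ in Set.Ioc (0:ℝ) (2*Real.pi), ‖F k θ‖
        ≤ ∫ _ in Set.Ioc (0:ℝ) (2*Real.pi), 2 * (‖a k‖ * r ^ k) * M := by
          apply setIntegral_mono_on (hFint k).norm (Iff.mpr integrableOn_const_iff (Or.inr (by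
            rw [Real.volume_Ioc]; exact ENNReal.ofReal_lt_top))) hmeas
          intro θ _
          exact hFbound k θ
      _ = 2 * (‖a k‖ * r ^ k) * M * (2 * Real.pi) := by
          rw [setIntegral_const, measureReal_def, hvol, smul_eq_mul, mul_comm]
  have hFsummable : Summable fun k => ∫ θ in Set.Ioc (0:ℝ) (2*Real.pi), ‖F k θ‖ := by
    exact Summable.of_nonneg_of_le
      (fun k => integral_nonneg (fun θ => norm_nonneg _)) hFintnorm
      (((hsum.mul_left 2).mul_right M).mul_right (2 * Real.pi))
  have hswap : ∫ θ in Set.Ioc (0:ℝ) (2*Real.pi), g θ * w θ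
      = ∑' k, ∫ θ in Set.Ioc (0:ℝ) (2*Real.pi), F k θ := by
    rw [setIntegral_congr_fun hmeas (fun θ _ => hgw θ)]
    exact (integral_tsum_of_summable_integral_norm hFint hFsummable).symm
  have hterm : ∀ k : ℕ, (∫ θ in Set.Ioc (0:ℝ) (2*Real.pi), F k θ)
      = if k = n then Real.pi * (r^n * (c^2 + s^2)) else 0 := by
    intro k
    rw [← intervalIntegral.integral_of_le h2pi]
    have hsplit : ∀ θ:ℝ, F k θ =
        (r ^ k * (a k).re * c) * (Real.cos ((k:ℝ)*θ) * Real.cos ((n:ℝ)*θ))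
      + (r ^ k * (a k).re * s) * (Real.cos ((k:ℝ)*θ) * Real.sin ((n:ℝ)*θ))
      + ((r ^ k * (I * a k).re * c) * (Real.sin ((k:ℝ)*θ) * Real.cos ((n:ℝ)*θ))
      + (r ^ k * (I * a k).re * s) * (Real.sin ((k:ℝ)*θ) * Real.sin ((n:ℝ)*θ))) := by
      intro θ
      simp only [hF_def, hw_def]
      ring
    rw [intervalIntegral.integral_congr (fun θ _ => hsplit θ)]
    have hc1 : Continuous fun θ:ℝ => Real.cos ((k:ℝ)*θ) * Real.cos ((n:ℝ)*θ) :=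
      (Real.continuous_cos.comp (continuous_const.mul continuous_id)).mul
        (Real.continuous_cos.comp (continuous_const.mul continuous_id))
    have hc2 : Continuous fun θ:ℝ => Real.cos ((k:ℝ)*θ) * Real.sin ((n:ℝ)*θ) :=
      (Real.continuous_cos.comp (continuous_const.mul continuous_id)).mul
        (Real.continuous_sin.comp (continuous_const.mul continuous_id))
    have hc3 : Continuous fun θ:ℝ => Real.sin ((k:ℝ)*θ) * Real.cos ((n:ℝ)*θ) :=
      (Real.continuous_sin.comp (continuous_const.mul continuous_id)).mul
        (Real.continuous_cos.comp (continuous_const.mul continuous_id))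
    have hc4 : Continuous fun θ:ℝ => Real.sin ((k:ℝ)*θ) * Real.sin ((n:ℝ)*θ) :=
      (Real.continuous_sin.comp (continuous_const.mul continuous_id)).mul
        (Real.continuous_sin.comp (continuous_const.mul continuous_id))
    rw [intervalIntegral.integral_add
      (((continuous_const.fun_mul hc1).fun_add (continuous_const.fun_mul hc2)).intervalIntegrable _ _)
      (((continuous_const.fun_mul hc3).fun_add (continuous_const.fun_mul hc4)).intervalIntegrable _ _)]
    rw [intervalIntegral.integral_add
      ((continuous_const.fun_mul hc1).intervalIntegrable _ _)
      ((continuous_const.fun_mul hc2).intervalIntegrable _ _)]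
    rw [intervalIntegral.integral_add
      ((continuous_const.fun_mul hc3).intervalIntegrable _ _)
      ((continuous_const.fun_mul hc4).intervalIntegrable _ _)]
    rw [intervalIntegral.integral_const_mul, intervalIntegral.integral_const_mul,
      intervalIntegral.integral_const_mul, intervalIntegral.integral_const_mul]
    rw [orth_cc k n hn, orth_cs k n, orth_sc k n, orth_ss k n hn]
    rcases eq_or_ne k n with h | h
    · subst h
      simp only [eq_self_iff_true, if_true, mul_zero, add_zero, zero_add]
      ring
    · simp [h]
  have hsum_ite : ∑' k : ℕ, (∫ θ in Set.Ioc (0:ℝ) (2*Real.pi), F k θ)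
      = Real.pi * (r^n * (c^2+s^2)) := by
    rw [tsum_congr hterm]
    exact tsum_ite_eq n _
  have hTval : ∫ θ in Set.Ioc (0:ℝ) (2*Real.pi), g θ * w θ = Real.pi * (r^n * M^2) := by
    rw [hswap, hsum_ite, hM2]
  have hTbound : |∫ θ in Set.Ioc (0:ℝ) (2*Real.pi), g θ * w θ| ≤ A * M * (2*Real.pi) := by
    rw [← intervalIntegral.integral_of_le h2pi]
    have hb := intervalIntegral.norm_integral_le_of_norm_le_const (C := A*M)
      (f := fun θ => g θ * w θ) (a := (0:ℝ)) (b := 2*Real.pi) ?_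
    · rw [Real.norm_eq_abs] at hb
      calc |∫ θ in (0:ℝ)..(2*Real.pi), g θ * w θ| ≤ A*M * |2*Real.pi - 0| := hb
        _ = A * M * (2*Real.pi) := by rw [sub_zero, abs_of_nonneg h2pi]
    · intro x _
      rw [Real.norm_eq_abs, abs_mul]
      exact mul_le_mul (hgA x) (hw x) (abs_nonneg _) hA0
  have hkey : Real.pi * (r^n * M^2) ≤ A * M * (2*Real.pi) := by
    rw [← hTval]
    exact le_trans (le_abs_self _) hTbound
  rcases eq_or_lt_of_le hMnn with hM0 | hM0
  · rw [← hM0, zero_mul]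
    linarith [hA0]
  · have hπ := Real.pi_pos
    nlinarith [pow_pos hr n, hM0, hkey, mul_pos hπ hM0]

lemma norm_le_re_add_im (x : ℍ) : ‖x‖ ≤ |x.re| + ‖x.im‖ := by
  have h1 : ‖x‖^2 ≤ (|x.re| + ‖x.im‖)^2 := by
    rw [norm_sq_eq]
    have := abs_nonneg x.re
    have := norm_nonneg x.im
    nlinarith [mul_nonneg (abs_nonneg x.re) (norm_nonneg x.im), sq_abs x.re]
  have h2 := Real.sqrt_le_sqrt h1
  rwa [Real.sqrt_sq (norm_nonneg x),
    Real.sqrt_sq (by positivity)] at h2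

/-- Quaternionic Borel–Carathéodory theorem. -/
theorem borel_caratheodory_quaternion
    (q₀ : ℝ) (r : ℝ) (hr : 0 < r) (a : ℕ → ℍ)
    (r' : ℝ) (hr' : r < r')
    (hsum : Summable (fun n => ‖a n‖ * r' ^ n))
    (A : ℝ)
    (hA : ∀ q : ℍ, ‖q - (q₀ : ℍ)‖ = r →
      |(∑' n, (q - (q₀ : ℍ)) ^ n * a n).re| ≤ A) :
    ∀ ρ : ℝ, 0 < ρ → ρ < r → ∀ q : ℍ, ‖q - (q₀ : ℍ)‖ ≤ ρ →
      ‖∑' n, (q - (q₀ : ℍ)) ^ n * a n‖ ≤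
        ‖(a 0).im‖ + |(a 0).re| * ((r + ρ) / (r - ρ)) + 2 * A * (ρ / (r - ρ)) := by
  intro ρ hρ hρr q hq
  have hsum_r : Summable (fun n => ‖a n‖ * r ^ n) := by
    apply Summable.of_nonneg_of_le (fun n => by positivity) _ hsum
    intro n
    gcongr
  have hcoeff : ∀ n : ℕ, n ≠ 0 → ‖a n‖ * r ^ n ≤ 2 * A :=
    coeff_bound q₀ r hr a hsum_r A hA
  have hA0 : 0 ≤ A := by
    have h0 := hA ((q₀ : ℍ) + (r : ℍ)) (by
      rw [add_sub_cancel_left, Quaternion.norm_coe, Real.norm_eq_abs, abs_of_pos hr])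
    exact le_trans (abs_nonneg _) h0
  have hρnn : 0 ≤ ρ := le_of_lt hρ
  have hrρ : 0 < r - ρ := by linarith
  have hterm_norm : ∀ n : ℕ, ‖(q - (q₀:ℍ))^n * a n‖ ≤ ‖a n‖ * ρ^n := by
    intro n
    rw [norm_mul, norm_pow, mul_comm]
    gcongr
  have hsum_ρ : Summable (fun n => ‖a n‖ * ρ ^ n) := by
    apply Summable.of_nonneg_of_le (fun n => by positivity) _ hsum_r
    intro n
    gcongr
  have hsummable : Summable (fun n => ‖(q - (q₀:ℍ))^n * a n‖) :=
    Summable.of_nonneg_of_le (fun n => norm_nonneg _) hterm_norm hsum_ρ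
  have htail_summable : Summable (fun n => ‖(q - (q₀:ℍ))^(n+1) * a (n+1)‖) :=
    (summable_nat_add_iff 1).mpr hsummable
  set x := ρ / r with hx_def
  have hx0 : 0 ≤ x := by positivity
  have hx1 : x < 1 := by
    rw [hx_def, div_lt_one hr]
    exact hρr
  have hgeo : Summable (fun n : ℕ => 2 * A * x ^ (n+1)) := by
    apply Summable.mul_left
    exact ((summable_geometric_of_lt_one hx0 hx1).mul_left x).congr (fun n => by
      rw [pow_succ]; ring)
  have htail_bound : ∀ n : ℕ, ‖(q - (q₀:ℍ))^(n+1) * a (n+1)‖ ≤ 2 * A * x ^ (n+1) := by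
    intro n
    calc ‖(q - (q₀:ℍ))^(n+1) * a (n+1)‖ ≤ ‖a (n+1)‖ * ρ^(n+1) := hterm_norm (n+1)
      _ = (‖a (n+1)‖ * r^(n+1)) * x^(n+1) := by
          rw [hx_def, div_pow]
          field_simp
      _ ≤ 2 * A * x^(n+1) :=
          mul_le_mul_of_nonneg_right (hcoeff (n+1) (Nat.succ_ne_zero n))
            (pow_nonneg hx0 (n+1))
  have hgeosum : ∑' n : ℕ, 2*A*x^(n+1) = 2*A*(ρ/(r-ρ)) := by
    rw [tsum_mul_left]
    congr 1
    have h1 : ∑' n : ℕ, x^(n+1) = x * (1-x)⁻¹ := by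
      have h2 : (fun n : ℕ => x^(n+1)) = fun n : ℕ => x * x^n := by
        funext n
        rw [pow_succ]
        ring
      rw [h2, tsum_mul_left, tsum_geometric_of_lt_one hx0 hx1]
    rw [h1, hx_def]
    have hr0 : (r:ℝ) ≠ 0 := ne_of_gt hr
    have hrρ0 : (r:ℝ) - ρ ≠ 0 := ne_of_gt hrρ
    field_simp
  calc ‖∑' n, (q - (q₀:ℍ))^n * a n‖
      ≤ ∑' n, ‖(q - (q₀:ℍ))^n * a n‖ := norm_tsum_le_tsum_norm hsummable
    _ = ‖(q-(q₀:ℍ))^0 * a 0‖ + ∑' n, ‖(q-(q₀:ℍ))^(n+1) * a (n+1)‖ :=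
        Summable.tsum_eq_zero_add hsummable
    _ ≤ ‖a 0‖ + 2*A*(ρ/(r-ρ)) := by
        have h1 : ‖(q-(q₀:ℍ))^0 * a 0‖ = ‖a 0‖ := by rw [pow_zero, one_mul]
        rw [h1, ← hgeosum]
        exact add_le_add le_rfl (Summable.tsum_le_tsum htail_bound htail_summable hgeo)
    _ ≤ ‖(a 0).im‖ + |(a 0).re| * ((r + ρ) / (r - ρ)) + 2 * A * (ρ / (r - ρ)) := by
        have hfac : (1:ℝ) ≤ (r+ρ)/(r-ρ) := by
          rw [le_div_iff₀ hrρ]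
          linarith
        have h2 : ‖a 0‖ ≤ ‖(a 0).im‖ + |(a 0).re| * ((r+ρ)/(r-ρ)) := by
          calc ‖a 0‖ ≤ |(a 0).re| + ‖(a 0).im‖ := norm_le_re_add_im _
            _ ≤ ‖(a 0).im‖ + |(a 0).re| * ((r+ρ)/(r-ρ)) := by
                nlinarith [abs_nonneg (a 0).re]
        linarith
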